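/- arXiv:2405.07859 — 2 statements merged into one kernel-verified Lean document; each statement's English description precedes it below -/
import Mathlib

section
/- Let J be a C*-algebra, let ε > 0, and let f : [0,1] → ℂ be a continuous function with f(0) = 0. Then there exists δ > 0 such that for any pair of contractions a, e in J with a ≥ 0, if ‖a*e - e*a‖ ≤ δ then ‖f(a)*e - e*f(a)‖ ≤ ε. (Here f(a) denotes the continuous functional calculus applied to a.) -/
open scoped MultiplierAlgebra

/-- `npow1 a k = a^(k+1)` in a non-unital ring. -/
private def npow1 {J : Type*} [NonUnitalRing J] (a : J) : ℕ → J
  | 0 => a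
  | (k + 1) => a * npow1 a k

private lemma norm_npow1_le {J : Type*} [NonUnitalCStarAlgebra J]
    (a : J) (ha : ‖a‖ ≤ 1) : ∀ k, ‖npow1 a k‖ ≤ 1
  | 0 => ha
  | (k + 1) => by
    calc ‖npow1 a (k + 1)‖ = ‖a * npow1 a k‖ := rfl
      _ ≤ ‖a‖ * ‖npow1 a k‖ := norm_mul_le _ _
      _ ≤ 1 * 1 := mul_le_mul ha (norm_npow1_le a ha k) (norm_nonneg _) zero_le_one
      _ = 1 := one_mul 1

private lemma comm_npow1_bound {J : Type*} [NonUnitalCStarAlgebra J]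
    (a e : J) (ha : ‖a‖ ≤ 1) : ∀ k : ℕ,
    ‖npow1 a k * e - e * npow1 a k‖ ≤ (k + 1) * ‖a * e - e * a‖
  | 0 => by simp [npow1]
  | (n + 1) => by
    have key : npow1 a (n + 1) * e - e * npow1 a (n + 1)
        = a * (npow1 a n * e - e * npow1 a n) + (a * e - e * a) * npow1 a n := by
      show a * npow1 a n * e - e * (a * npow1 a n) = _
      noncomm_ring
    calc ‖npow1 a (n + 1) * e - e * npow1 a (n + 1)‖
        ≤ ‖a * (npow1 a n * e - e * npow1 a n)‖ + ‖(a * e - e * a) * npow1 a n‖ := by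
          rw [key]; exact norm_add_le _ _
      _ ≤ ‖a‖ * ‖npow1 a n * e - e * npow1 a n‖ + ‖a * e - e * a‖ * ‖npow1 a n‖ :=
          add_le_add (norm_mul_le _ _) (norm_mul_le _ _)
      _ ≤ 1 * ((n + 1) * ‖a * e - e * a‖) + ‖a * e - e * a‖ * 1 :=
          add_le_add
            (mul_le_mul ha (comm_npow1_bound a e ha n) (norm_nonneg _) zero_le_one)
            (mul_le_mul_of_nonneg_left (norm_npow1_le a ha n) (norm_nonneg _))
      _ = (↑(n + 1) + 1) * ‖a * e - e * a‖ := by push_cast; ring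

private lemma cfcn_pow {J : Type*} [NonUnitalCStarAlgebra J]
    (a : J) (ha : IsStarNormal a) : ∀ k, cfcₙ (fun z : ℂ => z ^ (k + 1)) a = npow1 a k
  | 0 => by simpa [npow1] using cfcₙ_id' ℂ a
  | (n + 1) => by
    have h : (fun z : ℂ => z ^ (n + 1 + 1)) = fun z : ℂ => z * z ^ (n + 1) := by
      ext z; ring
    rw [h, cfcₙ_mul (fun z : ℂ => z) (fun z : ℂ => z ^ (n + 1)) a, cfcₙ_id' ℂ a,
      cfcn_pow a ha n]
    rfl

/-- Arveson's Lemma 1.1: for a C*-algebra `J`, `ε > 0` and a continuous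
function `f : [0,1] → ℂ` with `f 0 = 0`, there is `δ > 0` such that for any pair of
contractions `a e : J` with `a ≥ 0`, if `‖a * e - e * a‖ ≤ δ` then
`‖f(a) * e - e * f(a)‖ ≤ ε`, where `f(a)` is given by the (non-unital) continuous
functional calculus. -/
theorem stmt0 (J : Type*) [NonUnitalCStarAlgebra J] [PartialOrder J] [StarOrderedRing J]
    (ε : ℝ) (hε : 0 < ε) (f : ℝ → ℂ) (hf : ContinuousOn f (Set.Icc (0 : ℝ) 1))
    (hf0 : f 0 = 0) :
    ∃ δ > 0, ∀ a e : J, 0 ≤ a → ‖a‖ ≤ 1 → ‖e‖ ≤ 1 →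
      ‖a * e - e * a‖ ≤ δ →
      ‖cfcₙ (fun z : ℂ => f z.re) a * e - e * cfcₙ (fun z : ℂ => f z.re) a‖ ≤ ε := by
  -- polynomial approximation of real and imaginary parts
  obtain ⟨p, hp⟩ := exists_polynomial_near_of_continuousOn 0 1 (fun x => (f x).re)
      (Complex.continuous_re.comp_continuousOn hf) (ε / 16) (by positivity)
  obtain ⟨q, hq⟩ := exists_polynomial_near_of_continuousOn 0 1 (fun x => (f x).im)
      (Complex.continuous_im.comp_continuousOn hf) (ε / 16) (by positivity)
  set c : ℕ → ℂ := fun k => (p.coeff k : ℂ) + Complex.I * (q.coeff k : ℂ) with hc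
  set N : ℕ := max p.natDegree q.natDegree with hN
  -- the polynomial sum over [0,1] approximates f
  have hev : ∀ x : ℝ, (∑ k ∈ Finset.range (N + 1), c k * (x : ℂ) ^ k)
      = ((p.eval x : ℝ) : ℂ) + Complex.I * ((q.eval x : ℝ) : ℂ) := by
    intro x
    rw [Polynomial.eval_eq_sum_range' (p := p) (n := N + 1)
        (Nat.lt_succ_of_le (le_max_left _ _)) x,
      Polynomial.eval_eq_sum_range' (p := q) (n := N + 1)
        (Nat.lt_succ_of_le (le_max_right _ _)) x]
    push_cast
    rw [Finset.mul_sum, ← Finset.sum_add_distrib]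
    exact Finset.sum_congr rfl fun k _ => by rw [hc]; ring
  have hPval : ∀ x ∈ Set.Icc (0:ℝ) 1,
      ‖(∑ k ∈ Finset.range (N + 1), c k * (x : ℂ) ^ k) - f x‖ ≤ ε / 8 := by
    intro x hx
    rw [hev x]
    have : ((p.eval x : ℝ) : ℂ) + Complex.I * ((q.eval x : ℝ) : ℂ) - f x
        = ((p.eval x - (f x).re : ℝ) : ℂ) + Complex.I * ((q.eval x - (f x).im : ℝ) : ℂ) := by
      nth_rw 1 [← Complex.re_add_im (f x)]
      push_cast
      ring
    rw [this]
    calc ‖((p.eval x - (f x).re : ℝ) : ℂ) + Complex.I * ((q.eval x - (f x).im : ℝ) : ℂ)‖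
        ≤ ‖((p.eval x - (f x).re : ℝ) : ℂ)‖ + ‖Complex.I * ((q.eval x - (f x).im : ℝ) : ℂ)‖ :=
          norm_add_le _ _
      _ ≤ ε / 16 + ε / 16 := by
          rw [norm_mul, Complex.norm_I, one_mul, Complex.norm_real, Complex.norm_real]
          exact add_le_add (hp x hx).le (hq x hx).le
      _ = ε / 8 := by ring
  have hc0 : ‖c 0‖ ≤ ε / 8 := by
    have h0 : (0:ℝ) ∈ Set.Icc (0:ℝ) 1 := by norm_num
    have := hPval 0 h0
    simpa [hf0, Finset.sum_range_succ', hc] using this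
  -- the honest approximating function, vanishing at 0
  set h : ℂ → ℂ := fun z => ∑ k ∈ Finset.range N, c (k + 1) * z ^ (k + 1) with hh
  have hh0 : h 0 = 0 := by simp [hh]
  have hhx : ∀ x ∈ Set.Icc (0:ℝ) 1, ‖h (x : ℂ) - f x‖ ≤ ε / 4 := by
    intro x hx
    have hsum : h (x : ℂ)
        = (∑ k ∈ Finset.range (N + 1), c k * (x : ℂ) ^ k) - c 0 := by
      rw [Finset.sum_range_succ' (fun k => c k * (x : ℂ) ^ k) N]
      simp [hh]
    have : h (x : ℂ) - f x
        = ((∑ k ∈ Finset.range (N + 1), c k * (x : ℂ) ^ k) - f x) + (- c 0) := by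
      rw [hsum]; ring
    rw [this]
    calc ‖_ + (- c 0)‖ ≤ ‖(∑ k ∈ Finset.range (N + 1), c k * (x : ℂ) ^ k) - f x‖ + ‖c 0‖ := by
          simpa using norm_add_le _ (- c 0)
      _ ≤ ε / 8 + ε / 8 := add_le_add (hPval x hx) hc0
      _ = ε / 4 := by ring
  -- constants
  set C : ℝ := ∑ k ∈ Finset.range N, ‖c (k + 1)‖ * (k + 1) with hC
  have hC0 : 0 ≤ C := Finset.sum_nonneg fun k _ => by positivity
  refine ⟨ε / (2 * (C + 1)), by positivity, fun a e h0a ha1 he1 hδ => ?_⟩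
  have hsa : IsSelfAdjoint a := .of_nonneg h0a
  have hsn : IsStarNormal a := hsa.isStarNormal
  -- quasispectrum facts
  have hspec : ∀ z ∈ quasispectrum ℂ a, ((z.re : ℂ) = z ∧ z.re ∈ Set.Icc (0:ℝ) 1) := by
    intro z hz
    have h1 : (z.re : ℂ) = z := hsa.quasispectrumRestricts.rightInvOn hz
    have h2 : z.re ∈ quasispectrum ℝ a := by
      rw [← quasispectrum.algebraMap_mem_iff ℂ]
      simpa [h1] using hz
    have h3 : 0 ≤ z.re := quasispectrum_nonneg_of_nonneg a h0a z.re h2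
    have h4 : ‖z.re‖ ≤ ‖a‖ := by
      rw [Unitization.quasispectrum_eq_spectrum_inr' ℝ ℂ] at h2
      simpa [Unitization.norm_inr] using spectrum.norm_le_norm_of_mem h2
    exact ⟨h1, h3, by rw [Real.norm_eq_abs, abs_of_nonneg h3] at h4; linarith⟩
  have hgc : ContinuousOn (fun z : ℂ => f z.re) (quasispectrum ℂ a) :=
    hf.comp Complex.continuous_re.continuousOn fun z hz => (hspec z hz).2
  have hg0 : (fun z : ℂ => f z.re) 0 = 0 := by simpa using hf0
  have hhc : ContinuousOn h (quasispectrum ℂ a) := by fun_prop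
  -- cfcₙ of h is the polynomial expression
  have hHsum : cfcₙ h a = ∑ k ∈ Finset.range N, c (k + 1) • npow1 a k := by
    have hfn : h = ∑ k ∈ Finset.range N, (fun z : ℂ => c (k + 1) * z ^ (k + 1)) := by
      ext z; simp [hh]
    rw [hfn, cfcₙ_sum _ a _ (fun i _ => by fun_prop) (fun i _ => by simp)]
    refine Finset.sum_congr rfl fun k _ => ?_
    rw [cfcₙ_const_mul _ _ a (by fun_prop) (by simp), cfcn_pow a hsn k]
  -- difference bound
  have hdiff : ‖cfcₙ (fun z : ℂ => f z.re) a - cfcₙ h a‖ ≤ ε / 4 := by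
    rw [← cfcₙ_sub _ _ a hgc hg0 hhc hh0]
    refine norm_cfcₙ_le fun z hz => ?_
    obtain ⟨h1, h2⟩ := hspec z hz
    have := hhx z.re h2
    calc ‖f z.re - h z‖ = ‖h z - f z.re‖ := by rw [norm_sub_rev]
      _ = ‖h (z.re : ℂ) - f z.re‖ := by rw [h1]
      _ ≤ ε / 4 := this
  -- commutator bound for cfcₙ h a
  have hcommH : ‖cfcₙ h a * e - e * cfcₙ h a‖ ≤ C * ‖a * e - e * a‖ := by
    rw [hHsum, Finset.sum_mul, Finset.mul_sum, ← Finset.sum_sub_distrib]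
    calc ‖∑ k ∈ Finset.range N, (c (k + 1) • npow1 a k * e - e * c (k + 1) • npow1 a k)‖
        ≤ ∑ k ∈ Finset.range N, ‖c (k + 1) • npow1 a k * e - e * c (k + 1) • npow1 a k‖ :=
          norm_sum_le _ _
      _ ≤ ∑ k ∈ Finset.range N, ‖c (k + 1)‖ * ((k + 1) * ‖a * e - e * a‖) := by
          refine Finset.sum_le_sum fun k _ => ?_
          have heq : c (k + 1) • npow1 a k * e - e * c (k + 1) • npow1 a k
              = c (k + 1) • (npow1 a k * e - e * npow1 a k) := by
            rw [smul_sub, smul_mul_assoc, mul_smul_comm]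
          rw [heq, norm_smul]
          exact mul_le_mul_of_nonneg_left (comm_npow1_bound a e ha1 k) (norm_nonneg _)
      _ = C * ‖a * e - e * a‖ := by
          rw [hC, Finset.sum_mul]
          exact Finset.sum_congr rfl fun k _ => by push_cast; ring
  -- put everything together
  set G := cfcₙ (fun z : ℂ => f z.re) a with hG
  set H := cfcₙ h a with hH'
  have hkey : G * e - e * G = ((G - H) * e - e * (G - H)) + (H * e - e * H) := by
    noncomm_ring
  have hCd : C * ‖a * e - e * a‖ ≤ ε / 2 := by
    calc C * ‖a * e - e * a‖ ≤ C * (ε / (2 * (C + 1))) := by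
          exact mul_le_mul_of_nonneg_left hδ hC0
      _ ≤ (C + 1) * (ε / (2 * (C + 1))) := by
          have : (0:ℝ) < ε / (2 * (C + 1)) := by positivity
          nlinarith
      _ = ε / 2 := by field_simp
  calc ‖G * e - e * G‖ ≤ ‖(G - H) * e - e * (G - H)‖ + ‖H * e - e * H‖ := by
        rw [hkey]; exact norm_add_le _ _
    _ ≤ (‖(G - H) * e‖ + ‖e * (G - H)‖) + C * ‖a * e - e * a‖ :=
        add_le_add (norm_sub_le _ _) hcommH
    _ ≤ (‖G - H‖ * ‖e‖ + ‖e‖ * ‖G - H‖) + ε / 2 :=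
        add_le_add (add_le_add (norm_mul_le _ _) (norm_mul_le _ _)) hCd
    _ ≤ (ε / 4 * 1 + 1 * (ε / 4)) + ε / 2 := by
        have hGH : ‖G - H‖ ≤ ε / 4 := hdiff
        have h0e : (0:ℝ) ≤ ‖e‖ := norm_nonneg _
        have h0GH : (0:ℝ) ≤ ‖G - H‖ := norm_nonneg _
        gcongr <;> first | exact hGH | exact he1
    _ = ε := by ring
end

section
/- Let J be a C*-algebra with a countable approximate unit (u_n) of positive contractions satisfying u_{n+1}u_n = u_n, set Δ₀ = √u₀ and Δ_n = √(u_n − u_{n−1}) for n ≥ 1, and let m ∈ M(J) be a contraction. Suppose ∑_{l=0}^{∞} ‖m·Δ_l − Δ_l·m‖ < ∞. Then for each n, the series ∑_{l=n}^{∞} Δ_l·m·Δ_l converges strictly in M(J) to an element φ_n(m), and m − φ_0(m) ∈ J; i.e., q_J(φ_0(m)) = q_J(m) in the corona algebra Q(J) = M(J)/J. -/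
open scoped MultiplierAlgebra
open Filter

section Aux
variable {A : Type*} [NonUnitalCStarAlgebra A]

lemma aux_left_faithful {c : A} (h : ∀ z : A, z * c = 0) : c = 0 := by
  have h1 : ‖c‖ * ‖c‖ = 0 := by rw [← CStarRing.norm_star_mul_self, h (star c), norm_zero]
  simpa using mul_self_eq_zero.mp h1

lemma aux_right_faithful {c : A} (h : ∀ z : A, c * z = 0) : c = 0 := by
  have : star c = 0 := aux_left_faithful fun z => by
    have := congrArg star (h (star z)); simpa [star_mul] using this
  simpa using congrArg star this

lemma aux_mul_coe (m : 𝓜(ℂ, A)) (e : A) :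
    m * ((e : A) : 𝓜(ℂ, A)) = ((m.fst e : A) : 𝓜(ℂ, A)) := by
  refine DoubleCentralizer.ext _ _ _ _ (Prod.ext ?_ ?_)
  · refine ContinuousLinearMap.ext fun x => ?_
    show (m * (e : 𝓜(ℂ, A))).fst x = ((m.fst e : A) : 𝓜(ℂ, A)).fst x
    rw [DoubleCentralizer.mul_fst, DoubleCentralizer.coe_fst]
    show m.fst (e * x) = m.fst e * x
    have key : ∀ z : A, z * (m.fst (e * x) - m.fst e * x) = 0 := by
      intro z
      rw [mul_sub, ← m.central, ← mul_assoc, m.central, mul_assoc, sub_self]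
    exact sub_eq_zero.mp (aux_left_faithful key)
  · refine ContinuousLinearMap.ext fun x => ?_
    show (m * (e : 𝓜(ℂ, A))).snd x = ((m.fst e : A) : 𝓜(ℂ, A)).snd x
    rw [DoubleCentralizer.mul_snd, DoubleCentralizer.coe_snd]
    show ((e : 𝓜(ℂ, A)).snd (m.snd x)) = x * m.fst e
    rw [DoubleCentralizer.coe_snd]
    exact m.central x e

lemma aux_coe_mul (m : 𝓜(ℂ, A)) (e : A) :
    ((e : A) : 𝓜(ℂ, A)) * m = ((m.snd e : A) : 𝓜(ℂ, A)) := by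
  refine DoubleCentralizer.ext _ _ _ _ (Prod.ext ?_ ?_)
  · refine ContinuousLinearMap.ext fun x => ?_
    show (((e : A) : 𝓜(ℂ, A)) * m).fst x = ((m.snd e : A) : 𝓜(ℂ, A)).fst x
    rw [DoubleCentralizer.mul_fst, DoubleCentralizer.coe_fst]
    show ((e : 𝓜(ℂ, A)).fst (m.fst x)) = m.snd e * x
    rw [DoubleCentralizer.coe_fst]
    exact (m.central e x).symm
  · refine ContinuousLinearMap.ext fun x => ?_
    show (((e : A) : 𝓜(ℂ, A)) * m).snd x = ((m.snd e : A) : 𝓜(ℂ, A)).snd x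
    rw [DoubleCentralizer.mul_snd, DoubleCentralizer.coe_snd]
    show m.snd ((e : 𝓜(ℂ, A)).snd x) = x * m.snd e
    rw [DoubleCentralizer.coe_snd]
    show m.snd (x * e) = x * m.snd e
    have key : ∀ z : A, (m.snd (x * e) - x * m.snd e) * z = 0 := by
      intro z
      rw [sub_mul, m.central, mul_assoc, ← m.central, ← mul_assoc, sub_self]
    exact sub_eq_zero.mp (aux_right_faithful key)

lemma aux_norm_coe (a : A) : ‖((a : A) : 𝓜(ℂ, A))‖ = ‖a‖ := by
  rw [← DoubleCentralizer.norm_fst, DoubleCentralizer.coe_fst,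
    ContinuousLinearMap.opNorm_mul_apply]

lemma aux_coe_mul_coe (a b : A) :
    (((a * b : A)) : 𝓜(ℂ, A)) = (a : 𝓜(ℂ, A)) * (b : 𝓜(ℂ, A)) :=
  map_mul (DoubleCentralizer.coeHom (𝕜 := ℂ) (A := A)) a b

lemma aux_coe_sub (a b : A) :
    (((a - b : A)) : 𝓜(ℂ, A)) = (a : 𝓜(ℂ, A)) - (b : 𝓜(ℂ, A)) :=
  map_sub (DoubleCentralizer.coeHom (𝕜 := ℂ) (A := A)) a b

lemma aux_coe_sum {ι' : Type*} (s : Finset ι') (f : ι' → A) :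
    (((∑ i ∈ s, f i : A)) : 𝓜(ℂ, A)) = ∑ i ∈ s, ((f i : A) : 𝓜(ℂ, A)) :=
  map_sum (DoubleCentralizer.coeHom (𝕜 := ℂ) (A := A)) f s

lemma aux_coe_isometry : Isometry ((↑) : A → 𝓜(ℂ, A)) :=
  AddMonoidHomClass.isometry_of_norm (DoubleCentralizer.coeHom (𝕜 := ℂ) (A := A)) aux_norm_coe

end Aux

/-- let `J` be a C*-algebra with a countable approximate unit `(u_n)`
of positive contractions with `u_{n+1}u_n = u_n`, set `Δ₀ = √u₀`,
`Δ_n = √(u_n - u_{n-1})`, and let `m ∈ M(J)` be a contraction with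
`∑_l ‖mΔ_l - Δ_l m‖ < ∞`.  Then for each `n` the series `∑_{l≥n} Δ_l m Δ_l` converges
strictly in `M(J)` to an element `φ_n(m)`, and `m - φ₀(m)` lies in (the canonical image
of) `J`, i.e. `q_J(φ₀(m)) = q_J(m)` in the corona algebra. -/
theorem stmt15 (J : Type*) [NonUnitalCStarAlgebra J] [PartialOrder J] [StarOrderedRing J]
    (u : ℕ → J)
    (hpos : ∀ n, 0 ≤ u n) (hcontr : ∀ n, ‖u n‖ ≤ 1)
    (hunit : ∀ n, u (n + 1) * u n = u n)
    (happrox : ∀ a : J, Tendsto (fun n => u n * a) atTop (nhds a))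
    (Δ : ℕ → J)
    (hΔ0 : Δ 0 = cfcₙ Real.sqrt (u 0))
    (hΔ : ∀ n, Δ (n + 1) = cfcₙ Real.sqrt (u (n + 1) - u n))
    (m : 𝓜(ℂ, J)) (hm : ‖m‖ ≤ 1)
    (hsum : Summable fun l =>
      ‖m * ((Δ l : J) : 𝓜(ℂ, J)) - ((Δ l : J) : 𝓜(ℂ, J)) * m‖) :
    ∃ T : ℕ → 𝓜(ℂ, J),
      (∀ n, ∀ e : J,
        Tendsto (fun k => (∑ l ∈ Finset.Icc n k,
            ((Δ l : J) : 𝓜(ℂ, J)) * m * ((Δ l : J) : 𝓜(ℂ, J))) * ((e : J) : 𝓜(ℂ, J)))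
          atTop (nhds (T n * ((e : J) : 𝓜(ℂ, J)))) ∧
        Tendsto (fun k => ((e : J) : 𝓜(ℂ, J)) * ∑ l ∈ Finset.Icc n k,
            ((Δ l : J) : 𝓜(ℂ, J)) * m * ((Δ l : J) : 𝓜(ℂ, J)))
          atTop (nhds (((e : J) : 𝓜(ℂ, J)) * T n))) ∧
      m - T 0 ∈ Set.range ((↑) : J → 𝓜(ℂ, J)) := by
  have hsa : ∀ n, IsSelfAdjoint (u n) := fun n => .of_nonneg (hpos n)
  -- monotonicity of the approximate unit
  have hmono : ∀ n, u n ≤ u (n + 1) := by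
    intro n
    have hcommu : u n * u (n + 1) = u n := by
      have h := congrArg star (hunit n)
      rwa [star_mul, (hsa n).star_eq, (hsa (n + 1)).star_eq] at h
    have hb0 : (0 : Unitization ℂ J) ≤ (u (n + 1) : Unitization ℂ J) :=
      Unitization.inr_nonneg_iff.mpr (hpos (n + 1))
    have ha0 : (0 : Unitization ℂ J) ≤ (u n : Unitization ℂ J) :=
      Unitization.inr_nonneg_iff.mpr (hpos n)
    have hb1 : ((u (n + 1) : J) : Unitization ℂ J) ≤ 1 := by
      rw [← CStarAlgebra.norm_le_one_iff_of_nonneg _ hb0, Unitization.norm_inr]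
      exact hcontr (n + 1)
    have ha1 : ((u n : J) : Unitization ℂ J) ≤ 1 := by
      rw [← CStarAlgebra.norm_le_one_iff_of_nonneg _ ha0, Unitization.norm_inr]
      exact hcontr n
    have hstarb : star ((u (n + 1) : J) : Unitization ℂ J) = (u (n + 1) : Unitization ℂ J) := by
      rw [← Unitization.inr_star, (hsa (n + 1)).star_eq]
    have h1 : ((u n : J) : Unitization ℂ J)
        = star ((u (n + 1) : J) : Unitization ℂ J) * ((u n : J) : Unitization ℂ J)
          * ((u (n + 1) : J) : Unitization ℂ J) := by
      rw [hstarb, ← Unitization.inr_mul ℂ, ← Unitization.inr_mul ℂ, hunit n, hcommu]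
    have h2 := star_left_conjugate_le_conjugate ha1 ((u (n + 1) : J) : Unitization ℂ J)
    rw [← h1, mul_one, hstarb] at h2
    have h4 : ((u (n + 1) : J) : Unitization ℂ J) * ((u (n + 1) : J) : Unitization ℂ J)
        ≤ ((u (n + 1) : J) : Unitization ℂ J) := by
      have := CStarAlgebra.pow_antitone hb0 hb1 one_le_two
      simpa [pow_two] using this
    exact (Unitization.inr_le_iff _ _ (hsa n) (hsa (n + 1))).mp (h2.trans h4)
  -- the telescoping family
  set v : ℕ → J := fun n => match n with | 0 => 0 | (k + 1) => u k with hv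
  have hv0 : ∀ l, 0 ≤ v l := by rintro (_ | l) <;> simp [hv, hpos]
  have hdpos : ∀ l, 0 ≤ u l - v l := by
    rintro (_ | l)
    · simpa [hv] using hpos 0
    · simpa [hv, sub_nonneg] using hmono l
  have hΔl : ∀ l, Δ l = cfcₙ Real.sqrt (u l - v l) := by
    rintro (_ | l)
    · simpa [hv] using hΔ0
    · simpa [hv] using hΔ l
  have hΔsq : ∀ l, Δ l * Δ l = u l - v l := by
    intro l
    rw [hΔl l, ← cfcₙ_mul _ _ (u l - v l)]
    calc cfcₙ (fun x => Real.sqrt x * Real.sqrt x) (u l - v l)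
        = cfcₙ (id : ℝ → ℝ) (u l - v l) := by
          refine cfcₙ_congr fun x hx => ?_
          exact Real.mul_self_sqrt (quasispectrum_nonneg_of_nonneg _ (hdpos l) x hx)
      _ = u l - v l := cfcₙ_id ℝ _
  have hΔpos : ∀ l, 0 ≤ Δ l := fun l => by
    rw [hΔl l]; exact cfcₙ_nonneg fun x _ => Real.sqrt_nonneg x
  have hΔnorm : ∀ l, ‖Δ l‖ ≤ 1 := by
    intro l
    have h1 : ‖Δ l * Δ l‖ = ‖Δ l‖ * ‖Δ l‖ := by
      rw [← CStarRing.norm_star_mul_self, (IsSelfAdjoint.of_nonneg (hΔpos l)).star_eq]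
    have h2 : ‖u l - v l‖ ≤ 1 := by
      refine le_trans (CStarAlgebra.norm_le_norm_of_nonneg_of_le (hdpos l) ?_) (hcontr l)
      exact sub_le_self _ (hv0 l)
    rw [hΔsq l] at h1
    nlinarith [norm_nonneg (Δ l)]
  -- telescoping sums
  have hrange : ∀ k, ∑ l ∈ Finset.range k, (Δ l * Δ l) = v k := by
    intro k
    induction k with
    | zero => simp [hv]
    | succ k ih => rw [Finset.sum_range_succ, ih, hΔsq k]; simp [hv]
  have htel : ∀ n k, n ≤ k → ∑ l ∈ Finset.Icc n k, (Δ l * Δ l) = u k - v n := by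
    intro n k hnk
    rw [← Finset.Ico_add_one_right_eq_Icc, Finset.sum_Ico_eq_sub _ (hnk.trans (Nat.le_add_right k 1)),
      hrange, hrange]
  -- commutator terms
  have hcont : Continuous ((↑) : J → 𝓜(ℂ, J)) := aux_coe_isometry.continuous
  have hcomm_eq : ∀ l, m * ((Δ l : J) : 𝓜(ℂ, J)) - ((Δ l : J) : 𝓜(ℂ, J)) * m
      = ((m.fst (Δ l) - m.snd (Δ l) : J) : 𝓜(ℂ, J)) := by
    intro l
    rw [aux_mul_coe, aux_coe_mul, aux_coe_sub]
  set g : ℕ → J := fun l => Δ l * (m.fst (Δ l) - m.snd (Δ l)) with hgdef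
  have hgsum : Summable g := by
    refine Summable.of_norm_bounded hsum fun l => ?_
    calc ‖g l‖ ≤ ‖Δ l‖ * ‖m.fst (Δ l) - m.snd (Δ l)‖ := norm_mul_le _ _
      _ ≤ 1 * ‖m.fst (Δ l) - m.snd (Δ l)‖ :=
          mul_le_mul_of_nonneg_right (hΔnorm l) (norm_nonneg _)
      _ = ‖m * ((Δ l : J) : 𝓜(ℂ, J)) - ((Δ l : J) : 𝓜(ℂ, J)) * m‖ := by
          rw [one_mul, ← aux_norm_coe (m.fst (Δ l) - m.snd (Δ l)), ← hcomm_eq l]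
  set P : ℕ → J := fun k => ∑ l ∈ Finset.range k, g l with hPdef
  set G : J := ∑' l, g l with hGdef
  have hterm : ∀ l, ((Δ l : J) : 𝓜(ℂ, J)) * m * ((Δ l : J) : 𝓜(ℂ, J))
      = ((Δ l * Δ l : J) : 𝓜(ℂ, J)) * m + ((g l : J) : 𝓜(ℂ, J)) := by
    intro l
    have h1 : ((g l : J) : 𝓜(ℂ, J)) = ((Δ l : J) : 𝓜(ℂ, J)) *
        (m * ((Δ l : J) : 𝓜(ℂ, J)) - ((Δ l : J) : 𝓜(ℂ, J)) * m) := by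
      rw [hcomm_eq l, hgdef]
      exact aux_coe_mul_coe _ _
    rw [h1, aux_coe_mul_coe]
    noncomm_ring
  have hS : ∀ n k, n ≤ k →
      (∑ l ∈ Finset.Icc n k, ((Δ l : J) : 𝓜(ℂ, J)) * m * ((Δ l : J) : 𝓜(ℂ, J)))
      = ((u k - v n : J) : 𝓜(ℂ, J)) * m + ((P (k + 1) - P n : J) : 𝓜(ℂ, J)) := by
    intro n k hnk
    have hIg : ∑ l ∈ Finset.Icc n k, g l = P (k + 1) - P n := by
      rw [← Finset.Ico_add_one_right_eq_Icc, Finset.sum_Ico_eq_sub _ (hnk.trans (Nat.le_add_right k 1))]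
    calc (∑ l ∈ Finset.Icc n k, ((Δ l : J) : 𝓜(ℂ, J)) * m * ((Δ l : J) : 𝓜(ℂ, J)))
        = ∑ l ∈ Finset.Icc n k, (((Δ l * Δ l : J) : 𝓜(ℂ, J)) * m + ((g l : J) : 𝓜(ℂ, J))) :=
          Finset.sum_congr rfl fun l _ => hterm l
      _ = (∑ l ∈ Finset.Icc n k, ((Δ l * Δ l : J) : 𝓜(ℂ, J))) * m
          + ∑ l ∈ Finset.Icc n k, ((g l : J) : 𝓜(ℂ, J)) := by
          rw [Finset.sum_add_distrib, Finset.sum_mul]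
      _ = ((u k - v n : J) : 𝓜(ℂ, J)) * m + ((P (k + 1) - P n : J) : 𝓜(ℂ, J)) := by
          rw [← aux_coe_sum, ← aux_coe_sum, htel n k hnk, hIg]
  have hre : ∀ a : J, Tendsto (fun k => a * u k) atTop (nhds a) := by
    intro a
    have h : Tendsto (fun k => star (u k * star a)) atTop (nhds (star (star a))) :=
      (continuous_star.tendsto _).comp (happrox (star a))
    rw [star_star] at h
    refine h.congr fun k => ?_
    rw [star_mul, star_star, (hsa k).star_eq]
  refine ⟨fun n => m - ((v n : J) : 𝓜(ℂ, J)) * m + ((G - P n : J) : 𝓜(ℂ, J)), fun n e => ?_, ?_⟩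
  · have h3' : Tendsto (fun k => ((P (k + 1) - P n : J) : 𝓜(ℂ, J))) atTop
        (nhds ((G - P n : J) : 𝓜(ℂ, J))) := by
      refine (hcont.tendsto _).comp ?_
      have h4 : Tendsto (fun k => P (k + 1)) atTop (nhds G) :=
        hgsum.hasSum.tendsto_sum_nat.comp (tendsto_add_atTop_nat 1)
      exact h4.sub_const (P n)
    constructor
    · have h1 : Tendsto (fun k => ((u k * m.fst e : J) : 𝓜(ℂ, J))) atTop
          (nhds ((m.fst e : J) : 𝓜(ℂ, J))) :=
        (hcont.tendsto _).comp (happrox (m.fst e))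
      have hmain : Tendsto (fun k => ((u k * m.fst e : J) : 𝓜(ℂ, J))
          - ((v n : J) : 𝓜(ℂ, J)) * m * ((e : J) : 𝓜(ℂ, J))
          + ((P (k + 1) - P n : J) : 𝓜(ℂ, J)) * ((e : J) : 𝓜(ℂ, J))) atTop
          (nhds (((m.fst e : J) : 𝓜(ℂ, J)) - ((v n : J) : 𝓜(ℂ, J)) * m * ((e : J) : 𝓜(ℂ, J))
            + ((G - P n : J) : 𝓜(ℂ, J)) * ((e : J) : 𝓜(ℂ, J)))) :=
        (h1.sub_const _).add (h3'.mul_const _)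
      have hTe : ((m.fst e : J) : 𝓜(ℂ, J)) - ((v n : J) : 𝓜(ℂ, J)) * m * ((e : J) : 𝓜(ℂ, J))
          + ((G - P n : J) : 𝓜(ℂ, J)) * ((e : J) : 𝓜(ℂ, J))
          = (m - ((v n : J) : 𝓜(ℂ, J)) * m + ((G - P n : J) : 𝓜(ℂ, J))) * ((e : J) : 𝓜(ℂ, J)) := by
        rw [← aux_mul_coe m e]
        noncomm_ring
      rw [← hTe]
      refine Tendsto.congr' ?_ hmain
      filter_upwards [eventually_ge_atTop n] with k hk
      rw [hS n k hk, aux_coe_mul_coe (u k) (m.fst e), ← aux_mul_coe m e,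
        aux_coe_sub (u k) (v n)]
      noncomm_ring
    · have h1 : Tendsto (fun k => ((e * u k : J) : 𝓜(ℂ, J)) * m) atTop
          (nhds (((e : J) : 𝓜(ℂ, J)) * m)) :=
        ((hcont.tendsto _).comp (hre e)).mul_const m
      have hmain : Tendsto (fun k => ((e * u k : J) : 𝓜(ℂ, J)) * m
          - ((e : J) : 𝓜(ℂ, J)) * (((v n : J) : 𝓜(ℂ, J)) * m)
          + ((e : J) : 𝓜(ℂ, J)) * ((P (k + 1) - P n : J) : 𝓜(ℂ, J))) atTop
          (nhds (((e : J) : 𝓜(ℂ, J)) * m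
            - ((e : J) : 𝓜(ℂ, J)) * (((v n : J) : 𝓜(ℂ, J)) * m)
            + ((e : J) : 𝓜(ℂ, J)) * ((G - P n : J) : 𝓜(ℂ, J)))) :=
        (h1.sub_const _).add (h3'.const_mul _)
      have hTe : ((e : J) : 𝓜(ℂ, J)) * m
          - ((e : J) : 𝓜(ℂ, J)) * (((v n : J) : 𝓜(ℂ, J)) * m)
          + ((e : J) : 𝓜(ℂ, J)) * ((G - P n : J) : 𝓜(ℂ, J))
          = ((e : J) : 𝓜(ℂ, J))
            * (m - ((v n : J) : 𝓜(ℂ, J)) * m + ((G - P n : J) : 𝓜(ℂ, J))) := by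
        noncomm_ring
      rw [← hTe]
      refine Tendsto.congr' ?_ hmain
      filter_upwards [eventually_ge_atTop n] with k hk
      rw [hS n k hk, aux_coe_mul_coe e (u k), aux_coe_sub (u k) (v n)]
      noncomm_ring
  · refine ⟨-G, ?_⟩
    have h0 : ((v 0 : J) : 𝓜(ℂ, J)) = 0 := by
      show (((0 : J)) : 𝓜(ℂ, J)) = 0
      exact map_zero (DoubleCentralizer.coeHom (𝕜 := ℂ) (A := J))
    have hP0 : P 0 = 0 := by simp [hPdef]
    have hneg : ((-G : J) : 𝓜(ℂ, J)) = -((G : J) : 𝓜(ℂ, J)) :=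
      map_neg (DoubleCentralizer.coeHom (𝕜 := ℂ) (A := J)) G
    show ((-G : J) : 𝓜(ℂ, J))
        = m - (m - ((v 0 : J) : 𝓜(ℂ, J)) * m + ((G - P 0 : J) : 𝓜(ℂ, J)))
    rw [hneg, hP0, sub_zero, h0, zero_mul, sub_zero]
    abel
end
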